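/- Let A be a real n×n matrix, B a real n×m matrix, and M (r×n), N (r×m) real matrices. For every s ∈ ℂ such that sI − A and sI + Aᵀ are invertible (real matrices coerced entrywise into ℂ): [Nᵀ M, −Bᵀ] · (s·I_{2n} − [[A, 0], [Mᵀ M, −Aᵀ]])⁻¹ · [B; Mᵀ N] + Nᵀ N = K(−s)ᵀ K(s), where K(s) = M (sI − A)⁻¹ B + N and K(−s)ᵀ = Bᵀ(−sI − Aᵀ)⁻¹Mᵀ + Nᵀ. -/

import Mathlib

open Matrix

/-- Entrywise coercion of a real matrix into a complex matrix. -/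
def cm {α β : Type*} (M : Matrix α β ℝ) : Matrix α β ℂ :=
  M.map Complex.ofReal

theorem stmt_16 {n m r : ℕ} (A : Matrix (Fin n) (Fin n) ℝ)
    (B : Matrix (Fin n) (Fin m) ℝ)
    (M : Matrix (Fin r) (Fin n) ℝ) (N : Matrix (Fin r) (Fin m) ℝ) :
    ∀ s : ℂ,
      IsUnit (s • (1 : Matrix (Fin n) (Fin n) ℂ) - cm A) →
      IsUnit (s • (1 : Matrix (Fin n) (Fin n) ℂ) + (cm A)ᵀ) →
      Matrix.fromCols ((cm N)ᵀ * cm M) (-(cm B)ᵀ) *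
          (s • (1 : Matrix (Fin n ⊕ Fin n) (Fin n ⊕ Fin n) ℂ) -
            Matrix.fromBlocks (cm A) 0 ((cm M)ᵀ * cm M) (-(cm A)ᵀ))⁻¹ *
          Matrix.fromRows (cm B) ((cm M)ᵀ * cm N) + (cm N)ᵀ * cm N =
        ((cm B)ᵀ * (-(s • (1 : Matrix (Fin n) (Fin n) ℂ)) - (cm A)ᵀ)⁻¹ * (cm M)ᵀ +
            (cm N)ᵀ) *
          (cm M * (s • (1 : Matrix (Fin n) (Fin n) ℂ) - cm A)⁻¹ * cm B + cm N) := by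
  intro s hX hY
  set X : Matrix (Fin n) (Fin n) ℂ := s • 1 - cm A with hXdef
  set Y : Matrix (Fin n) (Fin n) ℂ := s • 1 + (cm A)ᵀ with hYdef
  -- the big matrix is a lower block triangular matrix
  have hblock :
      s • (1 : Matrix (Fin n ⊕ Fin n) (Fin n ⊕ Fin n) ℂ) -
        Matrix.fromBlocks (cm A) 0 ((cm M)ᵀ * cm M) (-(cm A)ᵀ) =
      Matrix.fromBlocks X 0 (-((cm M)ᵀ * cm M)) Y := by
    rw [← Matrix.fromBlocks_one, Matrix.fromBlocks_smul, sub_eq_add_neg,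
      Matrix.fromBlocks_neg, Matrix.fromBlocks_add]
    congr 1 <;> simp [hXdef, hYdef, sub_eq_add_neg]
  have hinv : (Matrix.fromBlocks X 0 (-((cm M)ᵀ * cm M)) Y)⁻¹ =
      Matrix.fromBlocks X⁻¹ 0 (-(Y⁻¹ * -((cm M)ᵀ * cm M) * X⁻¹)) Y⁻¹ :=
    Matrix.inv_fromBlocks_zero₁₂_of_isUnit_iff _ _ _ (by simp [hX, hY])
  -- the inverse of -(sI) - Aᵀ
  have hnegY : -(s • (1 : Matrix (Fin n) (Fin n) ℂ)) - (cm A)ᵀ = -Y := by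
    simp [hYdef]; abel
  have hYinv : (-Y)⁻¹ = -(Y⁻¹) := by
    apply Matrix.inv_eq_right_inv
    rw [neg_mul_neg, Matrix.mul_nonsing_inv _ ((Matrix.isUnit_iff_isUnit_det Y).mp hY)]
  rw [hblock, hinv, hnegY, hYinv, Matrix.fromCols_mul_fromBlocks,
    Matrix.fromCols_mul_fromRows]
  simp only [Matrix.mul_zero, Matrix.zero_mul, zero_add, add_zero, Matrix.neg_mul,
    Matrix.mul_neg, neg_neg, Matrix.mul_add, Matrix.add_mul, Matrix.mul_assoc]
  abel
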